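/- There exists an MDP M = (L, μ0, Σ, δ) and a strategy α such that M with strategy α is strongly synchronizing, but for every memoryless strategy β, M with strategy β is not strongly synchronizing. (Hence memoryless strategies are not sufficient for strongly synchronizing objectives in MDPs.) -/

import Mathlib

open Filter

namespace SyncMDP

/-- A history: an initial state followed by a list of (action, state) steps. -/
structure Hist (L A : Type) where
  start : L
  steps : List (A × L)
deriving DecidableEq

variable {L A : Type}

/-- The last state of a history. -/
def Hist.last (h : Hist L A) : L := h.steps.foldl (fun _ p => p.2) h.start

/-- The length of a history. -/
def Hist.len (h : Hist L A) : ℕ := h.steps.length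

/-- Extending a history by one action and one state. -/
def Hist.extend (h : Hist L A) (a : A) (l : L) : Hist L A := ⟨h.start, h.steps ++ [(a, l)]⟩

/-- A probability distribution on a finite type. -/
def IsDist {S : Type} [Fintype S] (d : S → ℝ) : Prop :=
  (∀ s, 0 ≤ d s) ∧ ∑ s, d s = 1

/-- A probabilistic transition function. -/
def IsTrans [Fintype L] (δ : L → A → L → ℝ) : Prop := ∀ l a, IsDist (δ l a)

/-- A (randomized) strategy assigns a distribution over actions to every history. -/
def IsStrategy [Fintype A] (α : Hist L A → A → ℝ) : Prop :=
  ∀ h : Hist L A, (∀ a, 0 ≤ α h a) ∧ ∑ a, α h a = 1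

/-- A pure strategy plays one action with probability one after every history. -/
def PureStrat (α : Hist L A → A → ℝ) : Prop := ∀ h, ∃ a, α h a = 1

/-- A blind strategy only depends on the length of the history. -/
def BlindStrat (α : Hist L A → A → ℝ) : Prop :=
  ∀ h₁ h₂ : Hist L A, h₁.len = h₂.len → α h₁ = α h₂

/-- A memoryless strategy only depends on the last state of the history. -/
def Memoryless (α : Hist L A → A → ℝ) : Prop :=
  ∀ h₁ h₂ : Hist L A, h₁.last = h₂.last → α h₁ = α h₂

/-- Auxiliary product for the probability of a history: the first argument is the current
state, the second the history (prefix) read so far, the third the remaining steps. -/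
def prAux (δ : L → A → L → ℝ) (α : Hist L A → A → ℝ) : L → Hist L A → List (A × L) → ℝ
  | _, _, [] => 1
  | cur, pre, (a, l) :: rest => α pre a * δ cur a l * prAux δ α l (pre.extend a l) rest

/-- The probability `Pr^α(h)` of a history `h`. -/
def pr (μ0 : L → ℝ) (δ : L → A → L → ℝ) (α : Hist L A → A → ℝ) (h : Hist L A) : ℝ :=
  μ0 h.start * prAux δ α h.start ⟨h.start, []⟩ h.steps

variable (L A) in
/-- The finite set of all histories of length `n`. -/
def hists [Fintype L] [DecidableEq L] [Fintype A] [DecidableEq A] : ℕ → Finset (Hist L A)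
  | 0 => Finset.univ.image fun l : L => ⟨l, []⟩
  | n + 1 => (hists n).biUnion fun h => Finset.univ.image fun p : A × L => h.extend p.1 p.2

variable [Fintype L] [DecidableEq L] [Fintype A] [DecidableEq A]

/-- The outcome `X_n^α` : the distribution over states at step `n` under strategy `α`. -/
noncomputable def outcome (μ0 : L → ℝ) (δ : L → A → L → ℝ) (α : Hist L A → A → ℝ)
    (n : ℕ) (l : L) : ℝ :=
  ∑ h ∈ (hists L A n).filter (fun h => h.last = l), pr μ0 δ α h

/-- The norm `‖X‖ = max_{ℓ ∈ L} X(ℓ)` of a distribution on a (nonempty) finite type. -/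
noncomputable def dnorm (X : L → ℝ) : ℝ := ⨆ l, X l

/-- Strongly synchronizing: `liminf_n ‖X_n^α‖ = 1`. -/
def StronglySync (μ0 : L → ℝ) (δ : L → A → L → ℝ) (α : Hist L A → A → ℝ) : Prop :=
  liminf (fun n => dnorm (outcome μ0 δ α n)) atTop = 1

/-- Weakly synchronizing: `limsup_n ‖X_n^α‖ = 1`. -/
def WeaklySync (μ0 : L → ℝ) (δ : L → A → L → ℝ) (α : Hist L A → A → ℝ) : Prop :=
  limsup (fun n => dnorm (outcome μ0 δ α n)) atTop = 1

open Classical in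
/-- `Post_σ(ℓ)`: the support of `δ(ℓ,σ)`. -/
noncomputable def post (δ : L → A → L → ℝ) (l : L) (a : A) : Finset L :=
  Finset.univ.filter fun l' => 0 < δ l a l'

/-- Transition function of the perfect-information subset construction. -/
noncomputable def deltaP (δ : L → A → L → ℝ) (s : Finset L) (f : L → A) : Finset L :=
  s.biUnion fun l => post δ l (f l)

/-- Transition function of the blind subset construction. -/
noncomputable def deltaB (δ : L → A → L → ℝ) (s : Finset L) (a : A) : Finset L :=
  s.biUnion fun l => post δ l a

open Classical in
/-- The initial cell: the support of `μ0`. -/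
noncomputable def initCell (μ0 : L → ℝ) : Finset L :=
  Finset.univ.filter fun l => 0 < μ0 l

/-- Reachability of a cell from the initial cell in the perfect-information
subset construction. -/
def ReachP (μ0 : L → ℝ) (δ : L → A → L → ℝ) (s : Finset L) : Prop :=
  Relation.ReflTransGen (fun t t' => ∃ f : L → A, deltaP δ t f = t') (initCell μ0) s

/-- Reachability of a cell from the initial cell in the blind subset construction. -/
def ReachB (μ0 : L → ℝ) (δ : L → A → L → ℝ) (s : Finset L) : Prop :=
  Relation.ReflTransGen (fun t t' => ∃ a : A, deltaB δ t a = t') (initCell μ0) s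

/-- Cyclic successor on `Fin d`. -/
def cyc {d : ℕ} (hd : 0 < d) (i : Fin d) : Fin d := ⟨((i : ℕ) + 1) % d, Nat.mod_lt _ hd⟩

/-- A recurrent cyclic set for the cycle `(s, act)` of length `d` of the
perfect-information subset construction. -/
def IsRCSP {d : ℕ} (hd : 0 < d) (δ : L → A → L → ℝ) (s : Fin d → Finset L)
    (act : Fin d → L → A) (g : Fin d → Finset L) : Prop :=
  ∀ i : Fin d, (g i).Nonempty ∧ g i ⊆ s i ∧
    (g i).biUnion (fun l => post δ l (act i l)) = g (cyc hd i)

/-- A minimal recurrent cyclic set (perfect-information). -/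
def IsMinRCSP {d : ℕ} (hd : 0 < d) (δ : L → A → L → ℝ) (s : Fin d → Finset L)
    (act : Fin d → L → A) (g : Fin d → Finset L) : Prop :=
  IsRCSP hd δ s act g ∧
    ∀ g' : Fin d → Finset L, IsRCSP hd δ s act g' → (∀ i, g' i ⊆ g i) → g' = g

/-- A recurrent cyclic set for the cycle `(s, act)` of length `d` of the blind
subset construction. -/
def IsRCSB {d : ℕ} (hd : 0 < d) (δ : L → A → L → ℝ) (s : Fin d → Finset L)
    (act : Fin d → A) (g : Fin d → Finset L) : Prop :=
  ∀ i : Fin d, (g i).Nonempty ∧ g i ⊆ s i ∧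
    (g i).biUnion (fun l => post δ l (act i)) = g (cyc hd i)

/-- A minimal recurrent cyclic set (blind). -/
def IsMinRCSB {d : ℕ} (hd : 0 < d) (δ : L → A → L → ℝ) (s : Fin d → Finset L)
    (act : Fin d → A) (g : Fin d → Finset L) : Prop :=
  IsRCSB hd δ s act g ∧
    ∀ g' : Fin d → Finset L, IsRCSB hd δ s act g' → (∀ i, g' i ⊆ g i) → g' = g


section Generic
variable {L A : Type}

lemma Hist.last_extend (h : Hist L A) (a : A) (l : L) : (h.extend a l).last = l := by
  simp [Hist.last, Hist.extend]

lemma Hist.len_extend (h : Hist L A) (a : A) (l : L) : (h.extend a l).len = h.len + 1 := by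
  simp [Hist.len, Hist.extend]

lemma prAux_append (δ : L → A → L → ℝ) (α : Hist L A → A → ℝ) :
    ∀ (s : List (A × L)) (cur : L) (pre : Hist L A) (a : A) (l : L),
      prAux δ α cur pre (s ++ [(a, l)]) =
        prAux δ α cur pre s * α ⟨pre.start, pre.steps ++ s⟩ a *
          δ (s.foldl (fun _ p => p.2) cur) a l := by
  intro s
  induction s with
  | nil =>
    intro cur pre a l
    simp [prAux]
  | cons q s ih =>
    intro cur pre a l
    obtain ⟨a', l'⟩ := q
    simp only [List.cons_append, prAux, List.foldl_cons, List.append_eq]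
    rw [ih]
    simp only [Hist.extend, List.append_assoc, List.singleton_append]
    ring

lemma pr_extend (μ0 : L → ℝ) (δ : L → A → L → ℝ) (α : Hist L A → A → ℝ)
    (h : Hist L A) (a : A) (l : L) :
    pr μ0 δ α (h.extend a l) = pr μ0 δ α h * α h a * δ h.last a l := by
  unfold pr Hist.extend
  rw [prAux_append]
  simp [Hist.last]
  ring

variable [Fintype L] [DecidableEq L] [Fintype A] [DecidableEq A]

lemma len_of_mem_hists : ∀ (n : ℕ) (h : Hist L A), h ∈ hists L A n → h.len = n := by
  intro n
  induction n with
  | zero =>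
    intro h hh
    simp only [hists, Finset.mem_image] at hh
    obtain ⟨l, -, rfl⟩ := hh
    rfl
  | succ n ih =>
    intro h hh
    simp only [hists, Finset.mem_biUnion, Finset.mem_image] at hh
    obtain ⟨h', hh', p, -, rfl⟩ := hh
    rw [Hist.len_extend, ih h' hh']

omit [Fintype L] [DecidableEq L] [Fintype A] [DecidableEq A] in
lemma extend_injective (h : Hist L A) : Function.Injective
    (fun p : A × L => h.extend p.1 p.2) := by
  intro p q hpq
  simp only [Hist.extend, Hist.mk.injEq] at hpq
  have := List.append_inj_right hpq.2 rfl
  simpa [Prod.ext_iff] using this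

lemma outcome_zero (μ0 : L → ℝ) (δ : L → A → L → ℝ) (α : Hist L A → A → ℝ) (l : L) :
    outcome μ0 δ α 0 l = μ0 l := by
  unfold outcome
  rw [show (hists L A 0) = Finset.univ.image fun l : L => (⟨l, []⟩ : Hist L A) from rfl]
  rw [Finset.filter_image]
  rw [Finset.sum_image (by intro a _ b _ hab; simpa using congrArg Hist.start hab)]
  have : (Finset.univ.filter fun x : L => Hist.last (⟨x, []⟩ : Hist L A) = l) = {l} := by
    ext x; simp [Hist.last]; exact Finset.mem_filter_univ x
  rw [this]
  simp [pr, prAux]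

lemma outcome_succ (μ0 : L → ℝ) (δ : L → A → L → ℝ) (α : Hist L A → A → ℝ)
    (φ : ℕ → L → A → ℝ) (hφ : ∀ h : Hist L A, α h = φ h.len h.last) (n : ℕ) (l' : L) :
    outcome μ0 δ α (n + 1) l' =
      ∑ l, outcome μ0 δ α n l * ∑ a, φ n l a * δ l a l' := by
  unfold outcome
  rw [Finset.sum_filter]
  rw [show (hists L A (n+1)) = (hists L A n).biUnion
      (fun h => Finset.univ.image fun p : A × L => h.extend p.1 p.2) from rfl]
  rw [Finset.sum_biUnion ?disj]
  case disj =>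
    intro h1 h1m h2 h2m hne
    simp only [Finset.disjoint_left, Finset.mem_image]
    rintro x ⟨p, -, rfl⟩ ⟨q, -, hq⟩
    apply hne
    simp only [Hist.extend, Hist.mk.injEq] at hq
    have hsteps := List.append_inj_left hq.2 (by simpa using congrArg List.length hq.2)
    cases h1; cases h2; simp_all
  have key : ∀ h ∈ hists L A n,
      (∑ x ∈ Finset.univ.image fun p : A × L => h.extend p.1 p.2,
        if x.last = l' then pr μ0 δ α x else 0)
      = pr μ0 δ α h * ∑ a, φ n h.last a * δ h.last a l' := by
    intro h hm
    rw [Finset.sum_image (fun a _ b _ hab => extend_injective h hab)]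
    rw [Fintype.sum_prod_type]
    have : ∀ a : A, (∑ l : L, if (h.extend a l).last = l'
        then pr μ0 δ α (h.extend a l) else 0)
        = pr μ0 δ α h * (φ n h.last a * δ h.last a l') := by
      intro a
      simp only [Hist.last_extend, pr_extend]
      rw [Finset.sum_ite_eq' Finset.univ l'
        (fun l => pr μ0 δ α h * α h a * δ h.last a l)]
      simp only [Finset.mem_univ, if_true]
      rw [hφ h, len_of_mem_hists n h hm]
      ring
    rw [Finset.sum_congr rfl fun a _ => this a, ← Finset.mul_sum]
  rw [Finset.sum_congr rfl key]
  rw [← Finset.sum_fiberwise (hists L A n) Hist.last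
    (fun h => pr μ0 δ α h * ∑ a, φ n h.last a * δ h.last a l')]
  apply Finset.sum_congr rfl
  intro l _
  rw [Finset.sum_filter]
  rw [Finset.sum_mul]
  rw [← Finset.sum_filter]
  apply Finset.sum_congr rfl
  intro h hh
  have : h.last = l := (Finset.mem_filter.mp hh).2
  rw [this]

end Generic
section Concrete

/-- Initial distribution: Dirac at state 0. -/
noncomputable def mu3 : Fin 3 → ℝ := ![1, 0, 0]

/-- Transitions: from 0 (both actions): 1/2 stay at 0, 1/2 go to 1.
From 1: action 0 goes to 2, action 1 goes to 0. From 2 (both actions): go to 1. -/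
noncomputable def del3 : Fin 3 → Fin 2 → Fin 3 → ℝ :=
  ![fun _ => ![1/2, 1/2, 0], ![![0, 0, 1], ![1, 0, 0]], fun _ => ![0, 1, 0]]

lemma mu3_dist : IsDist mu3 := by
  constructor
  · intro s; fin_cases s <;> norm_num [mu3]
  · simp [mu3, Fin.sum_univ_three]

lemma del3_trans : IsTrans del3 := by
  intro l a
  constructor
  · intro s; fin_cases l <;> fin_cases a <;> fin_cases s <;> norm_num [del3]
  · fin_cases l <;> fin_cases a <;> norm_num [del3, Fin.sum_univ_three, Matrix.cons_val_two]

/-- Action played at time `n` by the synchronizing blind strategy. -/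
def act3 (n : ℕ) : Fin 2 := if Even n then 0 else 1

/-- The synchronizing blind strategy. -/
noncomputable def alpha3 : Hist (Fin 3) (Fin 2) → Fin 2 → ℝ :=
  fun h a => if a = act3 h.len then 1 else 0

lemma alpha3_strat : IsStrategy alpha3 := by
  intro h
  constructor
  · intro a; unfold alpha3; positivity
  · simp only [alpha3]
    rw [Finset.sum_ite_eq' Finset.univ (act3 h.len) (fun _ => (1:ℝ))]
    simp

lemma alpha3_step (n : ℕ) (l' : Fin 3) :
    outcome mu3 del3 alpha3 (n+1) l' =
      outcome mu3 del3 alpha3 n 0 * del3 0 (act3 n) l' +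
      outcome mu3 del3 alpha3 n 1 * del3 1 (act3 n) l' +
      outcome mu3 del3 alpha3 n 2 * del3 2 (act3 n) l' := by
  rw [outcome_succ mu3 del3 alpha3 (fun n _ a => if a = act3 n then 1 else 0)
    (fun h => rfl) n l']
  rw [Fin.sum_univ_three]
  have inner : ∀ l : Fin 3,
      (∑ a : Fin 2, (if a = act3 n then (1:ℝ) else 0) * del3 l a l') =
        del3 l (act3 n) l' := by
    intro l
    rw [Fin.sum_univ_two]
    by_cases hn : Even n <;> simp [act3, hn]
  rw [inner 0, inner 1, inner 2]

lemma act3_even {n : ℕ} (h : Even n) : act3 n = 0 := by simp [act3, h]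
lemma act3_odd {n : ℕ} (h : ¬ Even n) : act3 n = 1 := by simp [act3, h]

lemma alpha3_closed : ∀ k : ℕ,
    (outcome mu3 del3 alpha3 (2*k) 0 = (3/4)^k ∧
     outcome mu3 del3 alpha3 (2*k) 1 = 1 - (3/4)^k ∧
     outcome mu3 del3 alpha3 (2*k) 2 = 0) ∧
    (outcome mu3 del3 alpha3 (2*k+1) 0 = (3/4)^k / 2 ∧
     outcome mu3 del3 alpha3 (2*k+1) 1 = (3/4)^k / 2 ∧
     outcome mu3 del3 alpha3 (2*k+1) 2 = 1 - (3/4)^k) := by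
  have evenstep : ∀ k : ℕ, (outcome mu3 del3 alpha3 (2*k) 0 = (3/4)^k ∧
      outcome mu3 del3 alpha3 (2*k) 1 = 1 - (3/4)^k ∧
      outcome mu3 del3 alpha3 (2*k) 2 = 0) →
      outcome mu3 del3 alpha3 (2*k+1) 0 = (3/4)^k/2 ∧
      outcome mu3 del3 alpha3 (2*k+1) 1 = (3/4)^k/2 ∧
      outcome mu3 del3 alpha3 (2*k+1) 2 = 1 - (3/4)^k := by
    rintro k ⟨h0, h1, h2⟩
    refine ⟨?_, ?_, ?_⟩ <;>
      [skip; skip; skip] <;>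
      (rw [alpha3_step, act3_even (even_two_mul k), h0, h1, h2]; norm_num [del3, Matrix.vecHead, Matrix.vecTail, Matrix.cons_val_two]; try ring)
  have oddstep : ∀ k : ℕ, (outcome mu3 del3 alpha3 (2*k+1) 0 = (3/4)^k/2 ∧
      outcome mu3 del3 alpha3 (2*k+1) 1 = (3/4)^k/2 ∧
      outcome mu3 del3 alpha3 (2*k+1) 2 = 1 - (3/4)^k) →
      outcome mu3 del3 alpha3 (2*(k+1)) 0 = (3/4)^(k+1) ∧
      outcome mu3 del3 alpha3 (2*(k+1)) 1 = 1 - (3/4)^(k+1) ∧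
      outcome mu3 del3 alpha3 (2*(k+1)) 2 = 0 := by
    rintro k ⟨h0, h1, h2⟩
    have hodd : ¬ Even (2*k+1) := by simp [Nat.even_add_one]
    have e : 2*(k+1) = (2*k+1)+1 := by ring
    refine ⟨?_, ?_, ?_⟩ <;>
      (rw [e, alpha3_step, act3_odd hodd, h0, h1, h2]; norm_num [del3, Matrix.vecHead, Matrix.vecTail, Matrix.cons_val_two]; try ring)
  intro k
  induction k with
  | zero =>
    have base : ∀ l, outcome mu3 del3 alpha3 0 l = mu3 l := outcome_zero mu3 del3 alpha3
    have b0 : outcome mu3 del3 alpha3 0 0 = 1 := (base 0).trans (by norm_num [mu3, Matrix.cons_val_two])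
    have b1 : outcome mu3 del3 alpha3 0 1 = 0 := (base 1).trans (by norm_num [mu3, Matrix.cons_val_two])
    have b2 : outcome mu3 del3 alpha3 0 2 = 0 := (base 2).trans (by norm_num [mu3, Matrix.cons_val_two])
    have h2k : (2*0 : ℕ) = 0 := rfl
    have hbase : outcome mu3 del3 alpha3 (2*0) 0 = (3/4:ℝ)^0 ∧
        outcome mu3 del3 alpha3 (2*0) 1 = 1 - (3/4:ℝ)^0 ∧
        outcome mu3 del3 alpha3 (2*0) 2 = 0 := by
      rw [h2k]; norm_num [b0, b1, b2]
    exact ⟨hbase, evenstep 0 hbase⟩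
  | succ k ih =>
    have he := oddstep k ih.2
    exact ⟨he, evenstep (k+1) he⟩

end Concrete

section Eval

lemma d3_0 (x : Fin 2) : del3 0 x 0 = 1/2 ∧ del3 0 x 1 = 1/2 ∧ del3 0 x 2 = 0 := by
  fin_cases x <;> norm_num [del3, Matrix.cons_val_two]

lemma d3_2 (x : Fin 2) : del3 2 x 0 = 0 ∧ del3 2 x 1 = 1 ∧ del3 2 x 2 = 0 := by
  fin_cases x <;> norm_num [del3, Matrix.vecHead, Matrix.vecTail, Matrix.cons_val_two]

lemma d3_10 : del3 1 0 0 = 0 ∧ del3 1 0 1 = 0 ∧ del3 1 0 2 = 1 := by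
  norm_num [del3, Matrix.vecHead, Matrix.vecTail, Matrix.cons_val_two]

lemma d3_11 : del3 1 1 0 = 1 ∧ del3 1 1 1 = 0 ∧ del3 1 1 2 = 0 := by
  norm_num [del3, Matrix.vecHead, Matrix.vecTail, Matrix.cons_val_two]

end Eval
section Norm

lemma dnorm3 (X : Fin 3 → ℝ) : dnorm X = max (X 0) (max (X 1) (X 2)) := by
  unfold dnorm
  apply le_antisymm
  · apply ciSup_le
    intro i
    fin_cases i
    · exact le_max_left _ _
    · exact le_trans (le_max_left _ _) (le_max_right _ _)
    · exact le_trans (le_max_right _ _) (le_max_right _ _)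
  · refine max_le (le_ciSup (Set.finite_range X).bddAbove 0)
      (max_le (le_ciSup (Set.finite_range X).bddAbove 1)
        (le_ciSup (Set.finite_range X).bddAbove 2))

end Norm

section Positive

lemma alpha3_sync : StronglySync mu3 del3 alpha3 := by
  have hdiv : Filter.Tendsto (fun n : ℕ => n / 2) atTop atTop := by
    apply Filter.tendsto_atTop_atTop.mpr
    intro b
    exact ⟨2 * b, fun n hn => (Nat.le_div_iff_mul_le two_pos).mpr (by omega)⟩
  have hpow : Filter.Tendsto (fun n : ℕ => ((3:ℝ)/4) ^ (n / 2)) atTop (nhds 0) :=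
    (tendsto_pow_atTop_nhds_zero_of_lt_one (by norm_num) (by norm_num)).comp hdiv
  have hlow₀ : Filter.Tendsto (fun n : ℕ => 1 - ((3:ℝ)/4) ^ (n / 2)) atTop (nhds 1) := by
    simpa using Filter.Tendsto.const_sub 1 hpow
  have hpk : ∀ k : ℕ, 0 ≤ ((3:ℝ)/4)^k ∧ ((3:ℝ)/4)^k ≤ 1 :=
    fun k => ⟨by positivity, pow_le_one₀ (by norm_num) (by norm_num)⟩
  have hlow : ∀ n : ℕ, 1 - ((3:ℝ)/4) ^ (n / 2) ≤ dnorm (outcome mu3 del3 alpha3 n) := by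
    intro n
    obtain ⟨k, hk | hk⟩ := Nat.even_or_odd' n
    · subst hk
      have h2 : 2 * k / 2 = k := by omega
      obtain ⟨⟨-, h1, -⟩, -⟩ := alpha3_closed k
      rw [dnorm3, h2, ← h1]
      exact le_trans (le_max_left _ _) (le_max_right _ _)
    · subst hk
      have h2 : (2 * k + 1) / 2 = k := by omega
      obtain ⟨-, ⟨-, -, h1⟩⟩ := alpha3_closed k
      rw [dnorm3, h2, ← h1]
      exact le_trans (le_max_right _ _) (le_max_right _ _)
  have hup : ∀ n : ℕ, dnorm (outcome mu3 del3 alpha3 n) ≤ 1 := by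
    intro n
    obtain ⟨k, hk | hk⟩ := Nat.even_or_odd' n
    · obtain ⟨⟨h0, h1, h2⟩, -⟩ := alpha3_closed k
      rw [dnorm3, hk, h0, h1, h2]
      obtain ⟨hp0, hp1⟩ := hpk k
      refine max_le hp1 (max_le (by linarith) (by norm_num))
    · obtain ⟨-, h0, h1, h2⟩ := alpha3_closed k
      rw [dnorm3, hk, h0, h1, h2]
      obtain ⟨hp0, hp1⟩ := hpk k
      refine max_le (by linarith) (max_le (by linarith) (by linarith))
  have : Filter.Tendsto (fun n => dnorm (outcome mu3 del3 alpha3 n)) atTop (nhds 1) :=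
    tendsto_of_tendsto_of_tendsto_of_le_of_le hlow₀ tendsto_const_nhds hlow hup
  exact this.liminf_eq

end Positive
section Negative

lemma beta_not_sync (β : Hist (Fin 3) (Fin 2) → Fin 2 → ℝ)
    (hS : IsStrategy β) (hM : Memoryless β) : ¬ StronglySync mu3 del3 β := by
  intro hlim
  rw [StronglySync] at hlim
  set O := outcome mu3 del3 β with hO
  set p : ℝ := β ⟨1, []⟩ 0 with hp
  set q : ℝ := β ⟨1, []⟩ 1 with hq
  have hp0 : 0 ≤ p := (hS ⟨1, []⟩).1 0
  have hq0 : 0 ≤ q := (hS ⟨1, []⟩).1 1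
  have hpq : p + q = 1 := by
    have := (hS ⟨1, []⟩).2; rwa [Fin.sum_univ_two] at this
  have s0 : β ⟨0, []⟩ 0 + β ⟨0, []⟩ 1 = 1 := by
    have := (hS ⟨0, []⟩).2; rwa [Fin.sum_univ_two] at this
  have s2 : β ⟨2, []⟩ 0 + β ⟨2, []⟩ 1 = 1 := by
    have := (hS ⟨2, []⟩).2; rwa [Fin.sum_univ_two] at this
  have hφ : ∀ h : Hist (Fin 3) (Fin 2),
      β h = (fun (_ : ℕ) (l : Fin 3) (a : Fin 2) => β ⟨l, []⟩ a) h.len h.last :=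
    fun h => hM h ⟨h.last, []⟩ rfl
  have hstep := fun n l' => outcome_succ mu3 del3 β
    (fun (_ : ℕ) (l : Fin 3) (a : Fin 2) => β ⟨l, []⟩ a) hφ n l'
  have hA : ∀ n, O (n+1) 0 = O n 0 / 2 + O n 1 * q := by
    intro n
    rw [hO, hstep n 0, Fin.sum_univ_three]
    simp only [Fin.sum_univ_two, (d3_0 0).1, (d3_0 0).2.1, (d3_0 0).2.2,
      (d3_0 1).1, (d3_0 1).2.1, (d3_0 1).2.2,
      (d3_2 0).1, (d3_2 0).2.1, (d3_2 0).2.2,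
      (d3_2 1).1, (d3_2 1).2.1, (d3_2 1).2.2,
      d3_10.1, d3_10.2.1, d3_10.2.2, d3_11.1, d3_11.2.1, d3_11.2.2]
    linear_combination (outcome mu3 del3 β n 0 / 2) * s0
  have hB : ∀ n, O (n+1) 1 = O n 0 / 2 + O n 2 := by
    intro n
    rw [hO, hstep n 1, Fin.sum_univ_three]
    simp only [Fin.sum_univ_two, (d3_0 0).1, (d3_0 0).2.1, (d3_0 0).2.2,
      (d3_0 1).1, (d3_0 1).2.1, (d3_0 1).2.2,
      (d3_2 0).1, (d3_2 0).2.1, (d3_2 0).2.2,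
      (d3_2 1).1, (d3_2 1).2.1, (d3_2 1).2.2,
      d3_10.1, d3_10.2.1, d3_10.2.2, d3_11.1, d3_11.2.1, d3_11.2.2]
    linear_combination (outcome mu3 del3 β n 0 / 2) * s0 + (outcome mu3 del3 β n 2) * s2
  have hC : ∀ n, O (n+1) 2 = O n 1 * p := by
    intro n
    rw [hO, hstep n 2, Fin.sum_univ_three]
    simp only [Fin.sum_univ_two, (d3_0 0).1, (d3_0 0).2.1, (d3_0 0).2.2,
      (d3_0 1).1, (d3_0 1).2.1, (d3_0 1).2.2,
      (d3_2 0).1, (d3_2 0).2.1, (d3_2 0).2.2,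
      (d3_2 1).1, (d3_2 1).2.1, (d3_2 1).2.2,
      d3_10.1, d3_10.2.1, d3_10.2.2, d3_11.1, d3_11.2.1, d3_11.2.2]
    ring
  have base : ∀ l, O 0 l = mu3 l := fun l => outcome_zero mu3 del3 β l
  have b0 : O 0 0 = 1 := (base 0).trans (by norm_num [mu3, Matrix.cons_val_two])
  have b1 : O 0 1 = 0 := (base 1).trans (by norm_num [mu3, Matrix.cons_val_two])
  have b2 : O 0 2 = 0 := (base 2).trans (by norm_num [mu3, Matrix.cons_val_two])
  have inv : ∀ n, 0 ≤ O n 0 ∧ 0 ≤ O n 1 ∧ 0 ≤ O n 2 ∧ O n 0 + O n 1 + O n 2 = 1 := by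
    intro n
    induction n with
    | zero => rw [b0, b1, b2]; norm_num
    | succ n ih =>
      obtain ⟨i0, i1, i2, isum⟩ := ih
      rw [hA, hB, hC]
      have m1 := mul_nonneg i1 hq0
      have m2 := mul_nonneg i1 hp0
      refine ⟨by linarith, by linarith, by linarith, ?_⟩
      linear_combination isum + O n 1 * hpq
  have dnonneg : ∀ n, 0 ≤ dnorm (O n) := by
    intro n
    rw [dnorm3]
    exact le_trans (inv n).1 (le_max_left _ _)
  have hev : ∀ ε : ℝ, 0 < ε → ∀ᶠ n in atTop, 1 - ε < dnorm (O n) := by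
    intro ε hε
    apply eventually_lt_of_lt_liminf
    · rw [hlim]; linarith
    · exact Filter.isBoundedUnder_of ⟨0, fun n => dnonneg n⟩
  have twoBig : ∀ n (ε : ℝ), 0 ≤ ε → ε ≤ O n 0 → ε ≤ O n 1 → dnorm (O n) ≤ 1 - ε := by
    intro n ε hε h1 h2
    rw [dnorm3]
    obtain ⟨i0, i1, i2, isum⟩ := inv n
    exact max_le (by linarith) (max_le (by linarith) (by linarith))
  have smallA : ∀ ε : ℝ, 0 < ε → ∀ᶠ n in atTop, O n 0 < ε := by
    intro ε hε
    have e := hev (ε/2) (by linarith)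
    rw [Filter.eventually_atTop] at e ⊢
    obtain ⟨N, hN⟩ := e
    refine ⟨N, fun n hn => ?_⟩
    by_contra hcon
    push_neg at hcon
    obtain ⟨i0, i1, i2, isum⟩ := inv n
    have h1 : ε/2 ≤ O (n+1) 0 := by
      rw [hA]; have := mul_nonneg i1 hq0; linarith
    have h2 : ε/2 ≤ O (n+1) 1 := by
      rw [hB]; linarith
    have hb := twoBig (n+1) (ε/2) (by linarith) h1 h2
    have := hN (n+1) (by omega)
    linarith
  -- first: the strategy must play action 0 at state 1 with probability one
  have hq_eq : q = 0 := by
    by_contra hqne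
    have hqpos : 0 < q := lt_of_le_of_ne hq0 (Ne.symm hqne)
    have hεpos : (0:ℝ) < min (1/4) (q/2) := lt_min (by norm_num) (by linarith)
    have e1 := hev (1/8) (by norm_num)
    have e2 := smallA _ hεpos
    rw [Filter.eventually_atTop] at e1 e2
    obtain ⟨N1, h1⟩ := e1
    obtain ⟨N2, h2⟩ := e2
    set N := max N1 N2 with hN
    have hfN : 1 - 1/8 < dnorm (O N) := h1 N (le_max_left _ _)
    have haN : O N 0 < min (1/4) (q/2) := h2 N (le_max_right _ _)
    have hbc : 7/8 < O N 1 ∨ 7/8 < O N 2 := by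
      by_contra hcon
      push_neg at hcon
      rw [dnorm3] at hfN
      have hε4 : min (1/4 : ℝ) (q/2) ≤ 1/4 := min_le_left _ _
      have : max (O N 0) (max (O N 1) (O N 2)) ≤ 7/8 :=
        max_le (by linarith) (max_le hcon.1 hcon.2)
      linarith
    obtain hb | hc := hbc
    · have hA1 : q/2 ≤ O (N+1) 0 := by
        rw [hA]
        nlinarith [(inv N).1]
      have hlt : O (N+1) 0 < min (1/4) (q/2) := h2 (N+1) (by omega)
      have := min_le_right (1/4 : ℝ) (q/2)
      linarith
    · have hb1 : (7:ℝ)/8 ≤ O (N+1) 1 := by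
        rw [hB]; have := (inv N).1; linarith
      have hA2 : q/2 ≤ O (N+2) 0 := by
        rw [hA]
        nlinarith [(inv (N+1)).1]
      have hlt : O (N+2) 0 < min (1/4) (q/2) := h2 (N+2) (by omega)
      have := min_le_right (1/4 : ℝ) (q/2)
      linarith
  have hp1 : p = 1 := by linarith
  -- closed form for the mass at state 0
  have ha : ∀ n, O n 0 = (1/2)^n := by
    intro n
    induction n with
    | zero => rw [b0]; norm_num
    | succ n ih => rw [hA, ih, hq_eq, pow_succ]; ring
  -- bound for the mass at state 2
  have hcb : ∀ n, O n 2 ≤ 2/3 - (2/3) * (1/2)^n ∧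
      O (n+1) 2 ≤ 2/3 - (2/3) * (1/2)^(n+1) := by
    intro n
    induction n with
    | zero =>
      rw [b2]
      constructor
      · norm_num
      · rw [hC, b1]; norm_num
    | succ n ih =>
      refine ⟨ih.2, ?_⟩
      have e1 : O (n+1+1) 2 = O n 0 / 2 + O n 2 := by rw [hC, hp1, hB]; ring
      have e2 : O n 0 = (1/2)^n := ha n
      have p1 : ((1:ℝ)/2)^(n+1) = (1/2)^n * (1/2) := pow_succ _ _
      have p2 : ((1:ℝ)/2)^(n+2) = (1/2)^n * (1/4) := by rw [pow_add]; norm_num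
      have := ih.1
      rw [e1, e2]
      rw [show n+1+1 = n+2 from rfl] at *
      linarith
  -- bound for the mass at state 1
  have hbb : ∀ n, O (n+1) 1 ≤ 2/3 := by
    intro n
    have e1 : O (n+1) 1 = (1/2)^n / 2 + O n 2 := by rw [hB, ha]; try ring
    have p1 : ((1:ℝ)/2)^(n+1) = (1/2)^n * (1/2) := pow_succ _ _
    have h2 := (hcb n).1
    have hpow : (0:ℝ) ≤ (1/2)^n := by positivity
    rw [e1]
    nlinarith
  -- contradiction
  have e := hev (1/4) (by norm_num)
  rw [Filter.eventually_atTop] at e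
  obtain ⟨N, hNe⟩ := e
  have hfin : dnorm (O (N+1)) ≤ 3/4 := by
    rw [dnorm3]
    have h0 : O (N+1) 0 ≤ 1/2 := by
      rw [ha]
      calc ((1:ℝ)/2)^(N+1) ≤ (1/2)^1 :=
            pow_le_pow_of_le_one (by norm_num) (by norm_num) (by omega)
        _ = 1/2 := by norm_num
    have h1 := hbb N
    have h2 := ((hcb N).2)
    have hpow : (0:ℝ) ≤ (2/3) * (1/2)^(N+1) := by positivity
    exact max_le (by linarith) (max_le (by linarith) (by linarith))
  have := hNe (N+1) (by omega)
  linarith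

end Negative

/-- There is an MDP (with finite state space `Fin n` and finite action
alphabet `Fin m`) and a strategy `α` that is strongly synchronizing, while no memoryless
strategy is strongly synchronizing. -/
theorem memoryless_insufficient_strongly :
    ∃ (n m : ℕ) (μ0 : Fin n → ℝ) (δ : Fin n → Fin m → Fin n → ℝ),
      IsDist μ0 ∧ IsTrans δ ∧
      (∃ α : Hist (Fin n) (Fin m) → Fin m → ℝ, IsStrategy α ∧ StronglySync μ0 δ α) ∧
      (∀ β : Hist (Fin n) (Fin m) → Fin m → ℝ,
        IsStrategy β → Memoryless β → ¬ StronglySync μ0 δ β) := by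
  exact ⟨3, 2, mu3, del3, mu3_dist, del3_trans, ⟨alpha3, alpha3_strat, alpha3_sync⟩,
    fun β hS hM => beta_not_sync β hS hM⟩

end SyncMDP
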